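/- Let M ∈ ℝ^{k×d} full row rank, M† its pseudoinverse, P̂ ∈ ℝ^{k×S} with nonnegative entries and row sums 1, and for each state i a matrix Φᵢ with ‖Φᵢ M†‖_∞ < 1/γ for 0 ≤ γ < 1. Define T: ℝ^k → ℝ^k by (T x) = R + γ P̂ v(x) where v(x)ᵢ = ‖Φᵢ M† x‖_∞. Then T is a contraction in the sup norm with modulus γ · maxᵢ ‖Φᵢ M†‖_∞ < 1, and hence has a unique fixed point q̂* ∈ ℝ^k. -/

import Mathlib

open Matrix

noncomputable def pinv {k d : ℕ} (M : Matrix (Fin k) (Fin d) ℝ) : Matrix (Fin d) (Fin k) ℝ :=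
  Mᵀ * (M * Mᵀ)⁻¹

noncomputable def rowSumNorm {m n : Type*} [Fintype m] [Fintype n]
    (A : Matrix m n ℝ) : ℝ :=
  ⨆ i, ∑ j, |A i j|

noncomputable def supNorm {n : Type*} [Fintype n] (x : n → ℝ) : ℝ := ⨆ i, |x i|

lemma supNorm_nonneg {n : Type*} [Fintype n] (x : n → ℝ) : 0 ≤ supNorm x :=
  Real.iSup_nonneg fun i => abs_nonneg _

lemma abs_le_supNorm {n : Type*} [Fintype n] (x : n → ℝ) (i : n) : |x i| ≤ supNorm x := by
  unfold supNorm
  exact le_ciSup (f := fun j => |x j|) (Set.Finite.bddAbove (Set.finite_range _)) i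

lemma supNorm_le {n : Type*} [Fintype n] {x : n → ℝ} {C : ℝ} (hC : 0 ≤ C)
    (h : ∀ i, |x i| ≤ C) : supNorm x ≤ C :=
  Real.iSup_le h hC

lemma rowSumNorm_nonneg {m n : Type*} [Fintype m] [Fintype n] (A : Matrix m n ℝ) :
    0 ≤ rowSumNorm A :=
  Real.iSup_nonneg fun i => Finset.sum_nonneg fun j _ => abs_nonneg _

lemma supNorm_mulVec_le {m n : Type*} [Fintype m] [Fintype n] (A : Matrix m n ℝ)
    (x : n → ℝ) : supNorm (A.mulVec x) ≤ rowSumNorm A * supNorm x := by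
  apply supNorm_le (mul_nonneg (rowSumNorm_nonneg A) (supNorm_nonneg x))
  intro i
  calc |A.mulVec x i| = |∑ j, A i j * x j| := rfl
    _ ≤ ∑ j, |A i j * x j| := Finset.abs_sum_le_sum_abs _ _
    _ = ∑ j, |A i j| * |x j| := by simp [abs_mul]
    _ ≤ ∑ j, |A i j| * supNorm x := by
        exact Finset.sum_le_sum fun j _ =>
          mul_le_mul_of_nonneg_left (abs_le_supNorm x j) (abs_nonneg _)
    _ = (∑ j, |A i j|) * supNorm x := by rw [Finset.sum_mul]
    _ ≤ rowSumNorm A * supNorm x := by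
        unfold rowSumNorm
        exact mul_le_mul_of_nonneg_right
          (le_ciSup (f := fun i => ∑ j, |A i j|)
            (Set.Finite.bddAbove (Set.finite_range _)) i) (supNorm_nonneg x)

lemma supNorm_add_le {n : Type*} [Fintype n] (x y : n → ℝ) :
    supNorm (x + y) ≤ supNorm x + supNorm y := by
  apply supNorm_le (add_nonneg (supNorm_nonneg x) (supNorm_nonneg y))
  intro i
  exact (abs_add_le _ _).trans (add_le_add (abs_le_supNorm x i) (abs_le_supNorm y i))

lemma abs_supNorm_sub_le {n : Type*} [Fintype n] (x y : n → ℝ) :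
    |supNorm x - supNorm y| ≤ supNorm (x - y) := by
  rw [abs_sub_le_iff]
  constructor
  · have := supNorm_add_le (x - y) y
    simpa using this
  · have := supNorm_add_le (y - x) x
    have h2 : supNorm (y - x) = supNorm (x - y) := by
      unfold supNorm; congr 1; ext i; simp [abs_sub_comm]
    simpa [h2] using this

lemma supNorm_eq_norm {n : ℕ} (x : Fin n → ℝ) : supNorm x = ‖x‖ := by
  apply le_antisymm
  · exact supNorm_le (norm_nonneg x) fun i =>
      (Real.norm_eq_abs (x i)) ▸ norm_le_pi_norm x i
  · rw [pi_norm_le_iff_of_nonneg (supNorm_nonneg x)]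
    intro i
    rw [Real.norm_eq_abs]
    exact abs_le_supNorm x i

theorem stmt15 {k d S : ℕ} [NeZero S] (M : Matrix (Fin k) (Fin d) ℝ)
    (hM : IsUnit (M * Mᵀ))
    (Phat : Matrix (Fin k) (Fin S) ℝ)
    (hP0 : ∀ i j, 0 ≤ Phat i j) (hP1 : ∀ i, ∑ j, Phat i j = 1)
    (a : Fin S → ℕ) (Φ : (i : Fin S) → Matrix (Fin (a i)) (Fin d) ℝ)
    (γ : ℝ) (hγ0 : 0 ≤ γ) (hγ1 : γ < 1)
    (hΦ : ∀ i, γ * rowSumNorm (Φ i * pinv M) < 1)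
    (R : Fin k → ℝ) :
    (γ * ⨆ i, rowSumNorm (Φ i * pinv M)) < 1 ∧
    (∀ x y : Fin k → ℝ,
      supNorm ((R + γ • Phat.mulVec fun i => supNorm ((Φ i * pinv M).mulVec x)) -
               (R + γ • Phat.mulVec fun i => supNorm ((Φ i * pinv M).mulVec y))) ≤
        (γ * ⨆ i, rowSumNorm (Φ i * pinv M)) * supNorm (x - y)) ∧
    (∃! qhat : Fin k → ℝ,
      qhat = R + γ • Phat.mulVec fun i => supNorm ((Φ i * pinv M).mulVec qhat)) := by
  set L : ℝ := ⨆ i, rowSumNorm (Φ i * pinv M) with hLdef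
  have hL0 : 0 ≤ L := Real.iSup_nonneg fun i => rowSumNorm_nonneg _
  have hne : Nonempty (Fin S) := ⟨⟨0, Nat.pos_of_ne_zero (NeZero.ne S)⟩⟩
  obtain ⟨i0, hi0⟩ := Finite.exists_max fun i => rowSumNorm (Φ i * pinv M)
  have hLle : L ≤ rowSumNorm (Φ i0 * pinv M) := ciSup_le hi0
  have hγL : γ * L < 1 :=
    lt_of_le_of_lt (mul_le_mul_of_nonneg_left hLle hγ0) (hΦ i0)
  have hLi : ∀ i, rowSumNorm (Φ i * pinv M) ≤ L := fun i =>
    le_ciSup (Set.Finite.bddAbove (Set.finite_range fun i => rowSumNorm (Φ i * pinv M))) i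
  set f : (Fin k → ℝ) → (Fin k → ℝ) :=
    fun q => R + γ • Phat.mulVec fun i => supNorm ((Φ i * pinv M).mulVec q) with hfdef
  have hcontr : ∀ x y : Fin k → ℝ,
      supNorm (f x - f y) ≤ (γ * L) * supNorm (x - y) := by
    intro x y
    set vx : Fin S → ℝ := fun i => supNorm ((Φ i * pinv M).mulVec x)
    set vy : Fin S → ℝ := fun i => supNorm ((Φ i * pinv M).mulVec y)
    have hv : ∀ j, |vx j - vy j| ≤ L * supNorm (x - y) := by
      intro j
      have h1 : |vx j - vy j| ≤ supNorm ((Φ j * pinv M).mulVec (x - y)) := by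
        have := abs_supNorm_sub_le ((Φ j * pinv M).mulVec x) ((Φ j * pinv M).mulVec y)
        rwa [← Matrix.mulVec_sub] at this
      refine h1.trans ((supNorm_mulVec_le _ _).trans ?_)
      exact mul_le_mul_of_nonneg_right (hLi j) (supNorm_nonneg _)
    have hfxy : f x - f y = γ • Phat.mulVec (vx - vy) := by
      simp only [hfdef, add_sub_add_left_eq_sub, ← smul_sub, Matrix.mulVec_sub]
      rfl
    rw [hfxy]
    apply supNorm_le
    · exact mul_nonneg (mul_nonneg hγ0 hL0) (supNorm_nonneg _)
    intro i
    have : |(Phat.mulVec (vx - vy)) i| ≤ L * supNorm (x - y) := by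
      calc |(Phat.mulVec (vx - vy)) i| = |∑ j, Phat i j * (vx j - vy j)| := rfl
        _ ≤ ∑ j, |Phat i j * (vx j - vy j)| := Finset.abs_sum_le_sum_abs _ _
        _ = ∑ j, Phat i j * |vx j - vy j| := by
            refine Finset.sum_congr rfl fun j _ => ?_
            rw [abs_mul, abs_of_nonneg (hP0 i j)]
        _ ≤ ∑ j, Phat i j * (L * supNorm (x - y)) :=
            Finset.sum_le_sum fun j _ => mul_le_mul_of_nonneg_left (hv j) (hP0 i j)
        _ = (∑ j, Phat i j) * (L * supNorm (x - y)) := by rw [Finset.sum_mul]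
        _ = L * supNorm (x - y) := by rw [hP1 i, one_mul]
    calc |(γ • Phat.mulVec (vx - vy)) i| = γ * |(Phat.mulVec (vx - vy)) i| := by
          simp [abs_mul, abs_of_nonneg hγ0]
      _ ≤ γ * (L * supNorm (x - y)) := mul_le_mul_of_nonneg_left this hγ0
      _ = (γ * L) * supNorm (x - y) := by ring
  refine ⟨hγL, hcontr, ?_⟩
  have hc0 : 0 ≤ γ * L := mul_nonneg hγ0 hL0
  set c : NNReal := ⟨γ * L, hc0⟩ with hcdef
  have hlip : LipschitzWith c f := by
    apply LipschitzWith.of_dist_le_mul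
    intro x y
    rw [dist_eq_norm, dist_eq_norm, ← supNorm_eq_norm, ← supNorm_eq_norm]
    exact hcontr x y
  have hCW : ContractingWith c f := ⟨by exact_mod_cast hγL, hlip⟩
  refine ⟨hCW.fixedPoint f, (hCW.fixedPoint_isFixedPt).symm, ?_⟩
  intro y hy
  exact hCW.fixedPoint_unique hy.symm
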